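/- Let n ≥ 2, let A ⊆ ℝⁿ be a closed set whose Hausdorff dimension is strictly less than n − 1, and let U ⊆ ℝⁿ be an open convex set. Then any two points q, q̃ ∈ U \ A can be joined by a continuous path contained in U \ A; in particular U \ A is path-connected. -/

import Mathlib

open Set MeasureTheory
open scoped ENNReal
open scoped RealInnerProductSpace

/-- If `A ⊆ ℝⁿ` (`n ≥ 2`) is closed with Hausdorff dimension strictly less than
`n - 1` and `U ⊆ ℝⁿ` is open and convex, then any two points of `U \ A` can be
joined by a continuous path inside `U \ A`; in particular `U \ A` is path-connected. -/
theorem joinedIn_compl_of_small_dimH (n : ℕ) (hn : 2 ≤ n)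
    (A : Set (EuclideanSpace ℝ (Fin n))) (hA : IsClosed A)
    (hdim : dimH A < (↑(n - 1) : ℝ≥0∞))
    (U : Set (EuclideanSpace ℝ (Fin n))) (hU : IsOpen U) (hUconv : Convex ℝ U) :
    ∀ q ∈ U \ A, ∀ q' ∈ U \ A, JoinedIn (U \ A) q q' := by
  intro q hq q' hq'
  rcases eq_or_ne q q' with rfl | hne
  · exact JoinedIn.refl hq
  set v : EuclideanSpace ℝ (Fin n) := q - q' with hv_def
  have hv : v ≠ 0 := sub_ne_zero.mpr hne
  have hvpos : (0 : ℝ) < ‖v‖ ^ 2 := by have := norm_pos_iff.mpr hv; positivity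
  -- small ball around q inside U \ A
  have hopen : IsOpen (U ∩ Aᶜ) := hU.inter hA.isOpen_compl
  obtain ⟨r, hr0, hrsub⟩ := Metric.isOpen_iff.mp hopen q ⟨hq.1, hq.2⟩
  -- the hyperplane direction
  set K : Submodule ℝ (EuclideanSpace ℝ (Fin n)) := (ℝ ∙ v)ᗮ with hK_def
  set m : ℕ := Module.finrank ℝ K with hm_def
  have hm : m = n - 1 := by
    have h1 : Module.finrank ℝ (ℝ ∙ v) = 1 := finrank_span_singleton hv
    have h2 : Module.finrank ℝ (ℝ ∙ v) + Module.finrank ℝ K = Module.finrank ℝ (EuclideanSpace ℝ (Fin n)) :=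
      Submodule.finrank_add_finrank_orthogonal _
    have h3 : Module.finrank ℝ (EuclideanSpace ℝ (Fin n)) = n := finrank_euclideanSpace_fin
    omega
  -- isometric parametrization of the hyperplane through q orthogonal to v
  set iso := (stdOrthonormalBasis ℝ K).repr with hiso
  set f : EuclideanSpace ℝ (Fin m) → EuclideanSpace ℝ (Fin n) := fun w => q + ((iso.symm w : K) : EuclideanSpace ℝ (Fin n)) with hf_def
  have hf : Isometry f := by
    apply Isometry.of_dist_eq
    intro w₁ w₂
    have : f w₁ - f w₂ = ((iso.symm w₁ - iso.symm w₂ : K) : EuclideanSpace ℝ (Fin n)) := by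
      simp [hf_def]
    rw [dist_eq_norm, this]
    rw [show ‖((iso.symm w₁ - iso.symm w₂ : K) : EuclideanSpace ℝ (Fin n))‖ = ‖(iso.symm w₁ - iso.symm w₂ : K)‖ from rfl]
    rw [← dist_eq_norm, iso.symm.dist_map]
  set S : Set (EuclideanSpace ℝ (Fin n)) := f '' Metric.ball 0 r with hS_def
  have hdimS : dimH S = (m : ℝ≥0∞) := by
    rw [hS_def, hf.dimH_image, Real.dimH_of_mem_nhds (Metric.ball_mem_nhds 0 hr0)]
    simp [finrank_euclideanSpace_fin]
  -- points of S are in the ball around q, and inner products with v are fixed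
  have hS_ball : ∀ z ∈ S, z ∈ Metric.ball q r := by
    rintro z ⟨w, hw, rfl⟩
    have : dist (f w) q = dist w 0 := by
      have h0 : f 0 = q := by simp [hf_def]
      rw [← h0, hf.dist_eq]
    simpa [Metric.mem_ball, this] using hw
  have hS_inner : ∀ z ∈ S, ⟪v, z - q'⟫ = ‖v‖ ^ 2 := by
    rintro z ⟨w, _, rfl⟩
    have hz : f w - q' = ((iso.symm w : K) : EuclideanSpace ℝ (Fin n)) + v := by
      simp [hf_def, hv_def]; abel
    have hk : ⟪v, ((iso.symm w : K) : EuclideanSpace ℝ (Fin n))⟫ = 0 := by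
      have := (iso.symm w).2
      rw [Submodule.mem_orthogonal] at this
      exact this v (Submodule.mem_span_singleton_self v)
    rw [hz, inner_add_right, hk, real_inner_self_eq_norm_sq, zero_add]
  -- the halfspace and the central projection
  set Ω : Set (EuclideanSpace ℝ (Fin n)) := {x | 0 < ⟪v, x - q'⟫} with hΩ_def
  have hΩconv : Convex ℝ Ω := by
    intro x hx y hy a b ha hb hab
    have hxy : (a • x + b • y) - q' = a • (x - q') + b • (y - q') := by
      have h' : a • (x - q') + b • (y - q') = a • x + b • y - (a + b) • q' := by
        rw [add_smul, smul_sub, smul_sub]; abel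
      rw [h', hab, one_smul]
    simp only [hΩ_def, mem_setOf_eq] at hx hy ⊢
    rw [hxy, inner_add_right, real_inner_smul_right, real_inner_smul_right]
    rcases ha.lt_or_eq with ha' | ha'
    · have hb' : 0 ≤ b * ⟪v, y - q'⟫ := mul_nonneg hb hy.le
      nlinarith
    · have hb1 : b = 1 := by linarith
      rw [← ha', hb1]; simpa using hy
  set P : EuclideanSpace ℝ (Fin n) → EuclideanSpace ℝ (Fin n) := fun x => q' + ((‖v‖ ^ 2) / ⟪v, x - q'⟫) • (x - q') with hP_def
  have hPsmooth : ContDiffOn ℝ 1 P Ω := by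
    have hg : ContDiff ℝ 1 (fun x : EuclideanSpace ℝ (Fin n) => ⟪v, x - q'⟫) := by
      have : ContDiff ℝ 1 (fun x : EuclideanSpace ℝ (Fin n) => x - q') := contDiff_id.sub contDiff_const
      exact (innerSL ℝ v).contDiff.comp this
    apply ContDiffOn.add contDiffOn_const
    apply ContDiffOn.fun_smul
    · exact ContDiffOn.div contDiffOn_const hg.contDiffOn (fun x hx => (hx : (0:ℝ) < _).ne')
    · exact (contDiff_id.sub contDiff_const).contDiffOn
  -- there is a point of S not in the projected image of A
  have hnotsub : ¬ (S ⊆ P '' (A ∩ Ω)) := by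
    intro hsub
    have h1 : dimH (P '' (A ∩ Ω)) ≤ dimH (A ∩ Ω) :=
      hPsmooth.dimH_image_le hΩconv inter_subset_right
    have h2 : dimH S ≤ dimH A :=
      (dimH_mono hsub).trans (h1.trans (dimH_mono inter_subset_left))
    rw [hdimS, hm] at h2
    exact absurd (h2.trans_lt hdim) (lt_irrefl _)
  obtain ⟨z, hzS, hzP⟩ := not_subset.mp hnotsub
  have hz_ball : z ∈ Metric.ball q r := hS_ball z hzS
  have hzUA : z ∈ U ∩ Aᶜ := hrsub hz_ball
  have hc : ⟪v, z - q'⟫ = ‖v‖ ^ 2 := hS_inner z hzS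
  -- the segment from z to q' avoids A
  have hseg : ∀ a ∈ segment ℝ z q', a ∉ A := by
    rintro a ⟨s, t, hs, ht, hst, rfl⟩ haA
    have hsub : s • z + t • q' - q' = s • (z - q') := by
      have : (s + t) • q' = q' := by rw [hst, one_smul]
      calc s • z + t • q' - q' = s • z + t • q' - (s + t) • q' := by rw [this]
        _ = s • (z - q') := by simp [smul_sub, add_smul]
    have hinner : ⟪v, s • z + t • q' - q'⟫ = s * ‖v‖ ^ 2 := by
      rw [hsub, real_inner_smul_right, hc]
    have hs0 : s ≠ 0 := by
      intro h0
      have h1 : s • z + t • q' - q' = 0 := by rw [hsub, h0, zero_smul]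
      rw [sub_eq_zero] at h1
      exact hq'.2 (h1 ▸ haA)
    have hspos : 0 < s := lt_of_le_of_ne hs hs0.symm
    have haΩ : s • z + t • q' ∈ Ω := by
      simp only [hΩ_def, mem_setOf_eq, hinner]
      positivity
    apply hzP
    refine ⟨s • z + t • q', ⟨haA, haΩ⟩, ?_⟩
    simp only [hP_def]
    rw [hinner, hsub, smul_smul]
    have h1 : ‖v‖ ^ 2 / (s * ‖v‖ ^ 2) * s = 1 := by
      rw [div_mul_eq_mul_div, mul_comm (‖v‖ ^ 2) s]
      exact div_self (by positivity)
    rw [h1, one_smul]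
    abel
  -- assemble the path
  have hUA_eq : U \ A = U ∩ Aᶜ := rfl
  have J1 : JoinedIn (U \ A) q z := by
    have hsub : segment ℝ q z ⊆ U \ A := by
      intro x hx
      exact hrsub ((convex_ball q r).segment_subset (Metric.mem_ball_self hr0) hz_ball hx)
    exact (((convex_segment q z).isPathConnected ⟨q, left_mem_segment ℝ q z⟩).joinedIn
      q (left_mem_segment ℝ q z) z (right_mem_segment ℝ q z)).mono hsub
  have J2 : JoinedIn (U \ A) z q' := by
    have hsub : segment ℝ z q' ⊆ U \ A := by
      intro x hx
      exact ⟨hUconv.segment_subset hzUA.1 hq'.1 hx, hseg x hx⟩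
    exact (((convex_segment z q').isPathConnected ⟨z, left_mem_segment ℝ z q'⟩).joinedIn
      z (left_mem_segment ℝ z q') q' (right_mem_segment ℝ z q')).mono hsub
  exact J1.trans J2
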